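/- The maximal order of ω(n) is O(log n / log log n): there exists a constant C such that for all integers n ≥ 3, ω(n) ≤ C · log n / log log n. -/

import Mathlib

open ArithmeticFunction
open scoped ArithmeticFunction.omega

-- log x ≤ x / e for x > 0
lemma aux_log_le_div_e {x : ℝ} (hx : 0 < x) : Real.log x ≤ x / Real.exp 1 := by
  have h1 : Real.log (x / Real.exp 1) ≤ x / Real.exp 1 - 1 :=
    Real.log_le_sub_one_of_pos (by positivity)
  rw [Real.log_div (ne_of_gt hx) (Real.exp_ne_zero 1), Real.log_exp] at h1
  linarith

-- log x ≤ x / 2 for x > 0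
lemma aux_log_le_half {x : ℝ} (hx : 0 < x) : Real.log x ≤ x / 2 := by
  have h1 : Real.log (x / 2) ≤ x / 2 - 1 :=
    Real.log_le_sub_one_of_pos (by positivity)
  rw [Real.log_div (ne_of_gt hx) (by norm_num)] at h1
  have h2 : Real.log 2 < 1 := by
    have := Real.log_two_lt_d9
    linarith
  linarith

theorem stmt_16 :
    ∃ C : ℝ, ∀ n : ℕ, 3 ≤ n →
      (ω n : ℝ) ≤ C * Real.log n / Real.log (Real.log n) := by
  use 4
  intro n hn
  have hn0 : 0 < n := by omega
  set L := Real.log n with hLdef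
  set M := Real.log L with hMdef
  have hL1 : 1 < L := by
    have he3 : Real.exp 1 < 3 := by
      have := Real.exp_one_lt_d9
      linarith
    have : Real.log (Real.exp 1) < Real.log 3 :=
      Real.log_lt_log (Real.exp_pos 1) he3
    rw [Real.log_exp] at this
    have h3n : Real.log 3 ≤ Real.log n :=
      Real.log_le_log (by norm_num) (by exact_mod_cast hn)
    rw [hLdef]; linarith
  have hL0 : 0 < L := by linarith
  have hM0 : 0 < M := Real.log_pos hL1
  -- L / M ≥ e
  have hLM_e : Real.exp 1 ≤ L / M := by
    have h := aux_log_le_div_e hL0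
    rw [← hMdef] at h
    rw [le_div_iff₀ hM0]
    calc Real.exp 1 * M ≤ Real.exp 1 * (L / Real.exp 1) := by
          apply mul_le_mul_of_nonneg_left h (le_of_lt (Real.exp_pos 1))
      _ = L := by field_simp
  have he1 : (1:ℝ) ≤ Real.exp 1 := by
    have := Real.add_one_le_exp (1:ℝ); linarith
  have hLM1 : 1 ≤ L / M := le_trans he1 hLM_e
  have hLM0 : 0 < L / M := by linarith
  -- define threshold T
  set T : ℕ := ⌈L / M⌉₊ with hTdef
  have hTge : L / M ≤ (T : ℝ) := Nat.le_ceil _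
  have hTle : (T : ℝ) ≤ L / M + 1 := le_of_lt (Nat.ceil_lt_add_one (le_of_lt hLM0))
  have hT2 : (T : ℝ) ≤ 2 * (L / M) := by linarith
  -- log T ≥ M / 2
  have hlogT : M / 2 ≤ Real.log T := by
    have h1 : Real.log (L / M) ≤ Real.log T := Real.log_le_log hLM0 hTge
    have h2 : Real.log (L / M) = M - Real.log M := by
      rw [Real.log_div (ne_of_gt hL0) (ne_of_gt hM0), ← hMdef]
    have h3 : Real.log M ≤ M / 2 := aux_log_le_half hM0
    linarith
  -- split prime factors
  have homega : (ω n : ℕ) = n.primeFactors.card := by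
    rw [ArithmeticFunction.cardDistinctFactors_apply]
    exact (List.card_toFinset _).symm
  set S := n.primeFactors with hSdef
  set Ssmall := S.filter (fun p => p < T) with hSsmall
  set Slarge := S.filter (fun p => ¬ p < T) with hSlarge
  have hsplit : Ssmall.card + Slarge.card = S.card :=
    Finset.card_filter_add_card_filter_not _
  -- small bound
  have hsmall : Ssmall.card ≤ T := by
    have : Ssmall ⊆ Finset.range T := by
      intro p hp
      rw [hSsmall, Finset.mem_filter] at hp
      exact Finset.mem_range.mpr hp.2
    simpa using Finset.card_le_card this
  -- large bound : T ^ Slarge.card ≤ n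
  have hlarge_pow : T ^ Slarge.card ≤ n := by
    have h1 : T ^ Slarge.card ≤ ∏ p ∈ Slarge, p := by
      apply Finset.pow_card_le_prod
      intro p hp
      rw [hSlarge, Finset.mem_filter] at hp
      omega
    have h2 : (∏ p ∈ Slarge, p) ≤ ∏ p ∈ S, p := by
      apply Finset.prod_le_prod_of_subset_of_one_le' (Finset.filter_subset _ _)
      intro p hp _
      exact Nat.one_le_iff_ne_zero.mpr (Nat.pos_of_mem_primeFactors hp).ne'
    have h3 : (∏ p ∈ S, p) ≤ n :=
      Nat.le_of_dvd hn0 (Nat.prod_primeFactors_dvd n)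
    omega
  -- real version of large bound
  have hlarge : (Slarge.card : ℝ) ≤ 2 * (L / M) := by
    have h1 : ((T : ℝ)) ^ Slarge.card ≤ (n : ℝ) := by
      exact_mod_cast hlarge_pow
    have hT0 : (0:ℝ) < T := lt_of_lt_of_le hLM0 hTge
    have h2 : Real.log ((T:ℝ) ^ Slarge.card) ≤ L := by
      rw [hLdef]
      exact Real.log_le_log (by positivity) h1
    rw [Real.log_pow] at h2
    have h3 : (Slarge.card : ℝ) * (M / 2) ≤ L := by
      calc (Slarge.card : ℝ) * (M / 2) ≤ (Slarge.card : ℝ) * Real.log T := by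
            apply mul_le_mul_of_nonneg_left hlogT (Nat.cast_nonneg _)
        _ ≤ L := h2
    have hgoal : (Slarge.card : ℝ) ≤ 2 * L / M := (le_div_iff₀ hM0).mpr (by linarith)
    rw [mul_div_assoc] at hgoal
    exact hgoal
  have hsmallR : (Ssmall.card : ℝ) ≤ 2 * (L / M) := by
    have : (Ssmall.card : ℝ) ≤ (T : ℝ) := by exact_mod_cast hsmall
    linarith
  have homR : (ω n : ℝ) = (Ssmall.card : ℝ) + (Slarge.card : ℝ) := by
    rw [homega, ← hsplit]; push_cast; ring
  rw [homR]
  have : 2 * (L / M) + 2 * (L / M) = 4 * L / M := by field_simp; ring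
  linarith
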